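/- arXiv:1609.04176 — 2 statements merged into one kernel-verified Lean document; each statement's English description precedes it below -/
import Mathlib

section
/- Let P be an RB-template (each letter of Σ_rdz labeling at most one edge) with reachability-unwinding P^⊸. Then exec_inf(P) ⊆ {π^◦ : π an infinite run of the template P^⊸}, where a run of the template P^⊸ is an infinite sequence of consecutive edges of P^⊸ starting at an initial state of P^⊸, and π^◦ erases component numbers from the states occurring in these edges. -/
/-! ### Core definitions: RB-templates and RB-systems -/

/-- Edge labels: a rendezvous letter `a_j` (an action together with an index in `[k]`),
or the broadcast letter `𝔟` (represented by `Sum.inr ()`). -/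
abbrev Lab (k : ℕ) (A : Type) := (A × Fin k) ⊕ Unit

/-- Edges of a labeled transition system over states `S`. -/
abbrev EdgeT (k : ℕ) (A S : Type) := S × Lab k A × S

/-- An RB-template: a set of initial states and a set of labeled edges. -/
structure RBTemplate (k : ℕ) (A : Type) (S : Type) where
  I : Set S
  R : Set (EdgeT k A S)

/-- Broadcast totality: every state has an outgoing broadcast edge. -/
def RBTemplate.BTotal {k : ℕ} {A S : Type} (P : RBTemplate k A S) : Prop :=
  ∀ s : S, ∃ t : S, (s, Sum.inr (), t) ∈ P.R

/-- Each rendezvous letter labels at most one edge. -/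
def RBTemplate.UniqLab {k : ℕ} {A S : Type} (P : RBTemplate k A S) : Prop :=
  ∀ (ς : A × Fin k) (s t s' t' : S),
    (s, Sum.inl ς, t) ∈ P.R → (s', Sum.inl ς, t') ∈ P.R → s = s' ∧ t = t'

/-- Synchronization label of a global transition of a system whose processes are
indexed by `ι`: either a broadcast, or a `k`-wise rendezvous on action `a` by the
processes `procs 0, …, procs (k-1)`. -/
inductive Sync (k : ℕ) (A : Type) (ι : Type) where
  | bcast : Sync k A ι
  | rdz (a : A) (procs : Fin k → ι) : Sync k A ι

/-- `(f, σ, g)` is a global transition of the system with processes indexed by `ι`. -/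
def RBTrans {k : ℕ} {A S : Type} (P : RBTemplate k A S) {ι : Type}
    (f : ι → S) (σ : Sync k A ι) (g : ι → S) : Prop :=
  match σ with
  | .bcast => ∀ i, (f i, Sum.inr (), g i) ∈ P.R
  | .rdz a procs =>
      Function.Injective procs ∧
      (∀ j : Fin k, (f (procs j), Sum.inl (a, j), g (procs j)) ∈ P.R) ∧
      (∀ i, (∀ j, procs j ≠ i) → g i = f i)

/-- Process `i` moves in a transition with synchronization label `σ`. -/
def Sync.Moved {k : ℕ} {A ι : Type} (σ : Sync k A ι) (i : ι) : Prop :=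
  match σ with
  | .bcast => True
  | .rdz _ procs => ∃ j, procs j = i

/-- The edge of the template taken by process `i` in the global transition `(f, σ, g)`
(`none` if `i` does not move). -/
noncomputable def edgeAt {k : ℕ} {A S ι : Type} (f g : ι → S) (σ : Sync k A ι) (i : ι) :
    Option (EdgeT k A S) :=
  match σ with
  | .bcast => some (f i, Sum.inr (), g i)
  | .rdz a procs =>
      letI := Classical.propDecidable (∃ j, procs j = i)
      if h : ∃ j, procs j = i then some (f i, Sum.inl (a, Classical.choose h), g i)
      else none

/-- A finite path of the RB-system with processes indexed by `ι`:
a length, configurations `conf 0, …, conf len`, and transitions between them. -/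
structure FinPath {k : ℕ} {A S : Type} (P : RBTemplate k A S) (ι : Type) where
  len : ℕ
  conf : ℕ → ι → S
  sync : ℕ → Sync k A ι
  valid : ∀ t, t < len → RBTrans P (conf t) (sync t) (conf (t + 1))

/-- An infinite path of the RB-system with processes indexed by `ι`. -/
structure InfPath {k : ℕ} {A S : Type} (P : RBTemplate k A S) (ι : Type) where
  conf : ℕ → ι → S
  sync : ℕ → Sync k A ι
  valid : ∀ t, RBTrans P (conf t) (sync t) (conf (t + 1))

/-- A finite run: a finite path starting at an initial configuration. -/
def FinPath.IsRun {k : ℕ} {A S : Type} {P : RBTemplate k A S} {ι : Type}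
    (p : FinPath P ι) : Prop :=
  ∀ i, p.conf 0 i ∈ P.I

/-- An infinite run: an infinite path starting at an initial configuration. -/
def InfPath.IsRun {k : ℕ} {A S : Type} {P : RBTemplate k A S} {ι : Type}
    (p : InfPath P ι) : Prop :=
  ∀ i, p.conf 0 i ∈ P.I

/-- The projection of a finite path onto process `i`: the sequence of edges taken by `i`. -/
noncomputable def FinPath.proj {k : ℕ} {A S : Type} {P : RBTemplate k A S} {ι : Type}
    (p : FinPath P ι) (i : ι) : List (EdgeT k A S) :=
  (List.range p.len).filterMap (fun t => edgeAt (p.conf t) (p.conf (t + 1)) (p.sync t) i)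

/-- The number of broadcast transitions on a finite path. -/
noncomputable def FinPath.bcasts {k : ℕ} {A S : Type} {P : RBTemplate k A S} {ι : Type}
    (p : FinPath P ι) : ℕ :=
  Nat.card {t : ℕ // t < p.len ∧ p.sync t = Sync.bcast}

/-- The set of finite executions of the RB-system induced by `P`: projections onto
process `0` of the finite runs of the systems `P^n`, `n ∈ ℕ`. -/
def execFin {k : ℕ} {A S : Type} (P : RBTemplate k A S) : Set (List (EdgeT k A S)) :=
  {w | ∃ n : ℕ, ∃ p : FinPath P (Fin (n + 1)), p.IsRun ∧ p.proj 0 = w}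

/-- The set of infinite executions of the RB-system induced by `P`: infinite projections
onto process `0` of the runs of the systems `P^n`, `n ∈ ℕ`.  Here `ι` enumerates, in
increasing order, exactly the transitions in which process `0` moves. -/
def execInf {k : ℕ} {A S : Type} (P : RBTemplate k A S) : Set (ℕ → EdgeT k A S) :=
  {w | ∃ n : ℕ, ∃ p : InfPath P (Fin (n + 1)), p.IsRun ∧
    ∃ ι : ℕ → ℕ, StrictMono ι ∧
      (∀ t, (p.sync t).Moved 0 ↔ ∃ m, ι m = t) ∧
      (∀ m, edgeAt (p.conf (ι m)) (p.conf (ι m + 1)) (p.sync (ι m)) 0 = some (w m))}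

/-! ### The reachability-unwinding -/

/-- `X` is closed under the saturation rule for the set `J` of initial states. -/
def SatClosed {k : ℕ} {A S : Type} (P : RBTemplate k A S) (J : Set S) (X : Set S) : Prop :=
  J ⊆ X ∧ ∀ (s : S) (a : A) (_h : Fin k) (t : S), s ∈ X → (s, Sum.inl (a, _h), t) ∈ P.R →
    (∀ l : Fin k, ∃ s' t' : S, s' ∈ X ∧ (s', Sum.inl (a, l), t') ∈ P.R) → t ∈ X

/-- The saturated state set `S_i` generated from the set `J` of initial states:
the least set containing `J` and closed under the saturation rule. -/
def SatS {k : ℕ} {A S : Type} (P : RBTemplate k A S) (J : Set S) : Set S :=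
  ⋂₀ {X | SatClosed P J X}

/-- The saturated edge set `R_i` generated from the set `J` of initial states. -/
def SatR {k : ℕ} {A S : Type} (P : RBTemplate k A S) (J : Set S) : Set (EdgeT k A S) :=
  {e | ∃ (s : S) (a : A) (h : Fin k) (t : S), e = (s, Sum.inl (a, h), t) ∧
    s ∈ SatS P J ∧ e ∈ P.R ∧
    ∀ l : Fin k, ∃ s' t' : S, s' ∈ SatS P J ∧ (s', Sum.inl (a, l), t') ∈ P.R}

/-- The initial-state sets `I_i` of the components `P_i` of the reachability-unwinding
(each component `P_i = (S_i, I_i, R_i)` is completely determined by `I_i`, via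
`S_i = SatS P (compI P i)` and `R_i = SatR P (compI P i)`). -/
def compI {k : ℕ} {A S : Type} (P : RBTemplate k A S) : ℕ → Set S
  | 0 => P.I
  | i + 1 => {s | ∃ h : S, h ∈ SatS P (compI P i) ∧ (h, Sum.inr (), s) ∈ P.R}

/-- `(n, m)` is the (least) lasso pair of the unwinding construction: the components
`P_0, …, P_m` are pairwise distinct and `P_n = P_{m+1}`.  The prefix length is `n` and
the period is `r = m + 1 - n`. -/
def IsLasso {k : ℕ} {A S : Type} (P : RBTemplate k A S) (n m : ℕ) : Prop :=
  n ≤ m ∧ compI P n = compI P (m + 1) ∧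
    ∀ i j : ℕ, i < j → j ≤ m → compI P i ≠ compI P j

/-- The component number associated with `i`, for the lasso pair `(n, m)`. -/
def compAt (n m i : ℕ) : ℕ := if i ≤ m then i else n + (i - n) % (m + 1 - n)

/-- The reachability-unwinding `P^⊸` of `P`, for the lasso pair `(n, m)`: states are
pairs (state of `P`, component number). -/
def unwind {k : ℕ} {A S : Type} (P : RBTemplate k A S) (n m : ℕ) :
    RBTemplate k A (S × ℕ) where
  I := {x | x.1 ∈ P.I ∧ x.2 = 0}
  R := {e | (∃ (s t : S) (ς : A × Fin k) (i : ℕ), i ≤ m ∧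
              e = ((s, i), Sum.inl ς, (t, i)) ∧ (s, Sum.inl ς, t) ∈ SatR P (compI P i)) ∨
            (∃ (s t : S) (i : ℕ), i ≤ m ∧
              e = ((s, i), Sum.inr (), (t, compAt n m (i + 1))) ∧
              s ∈ SatS P (compI P i) ∧ (s, Sum.inr (), t) ∈ P.R)}

/-- Erasing the component numbers from an edge of the unwinding. -/
def erE {k : ℕ} {A S : Type} (e : EdgeT k A (S × ℕ)) : EdgeT k A S :=
  (e.1.1, e.2.1, e.2.2.1)

/-- An infinite run of a template viewed as an LTS: an infinite sequence of
consecutive edges starting at an initial state. -/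
def TemplateRunInf {k : ℕ} {A S : Type} (P' : RBTemplate k A S)
    (w : ℕ → EdgeT k A S) : Prop :=
  (∀ t, w t ∈ P'.R) ∧ (∀ t, (w (t + 1)).1 = (w t).2.2) ∧ (w 0).1 ∈ P'.I


/-! ### Auxiliary lemmas for Statement 7 -/

/-- Broadcast counter: number of broadcast transitions among the first `t` transitions. -/
def bC {k : ℕ} {A ι : Type} (σ : ℕ → Sync k A ι) : ℕ → ℕ
  | 0 => 0
  | t + 1 => bC σ t + (match σ t with | .bcast => 1 | .rdz _ _ => 0)

lemma mem_satS {k : ℕ} {A S : Type} {P : RBTemplate k A S} {J : Set S} {s : S} :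
    s ∈ SatS P J ↔ ∀ X, SatClosed P J X → s ∈ X := Set.mem_sInter

lemma satClosed_satS {k : ℕ} {A S : Type} (P : RBTemplate k A S) (J : Set S) :
    SatClosed P J (SatS P J) := by
  constructor
  · intro s hs
    exact mem_satS.mpr (fun X hX => hX.1 hs)
  · intro s a h t hs he hall
    refine mem_satS.mpr (fun X hX => ?_)
    refine hX.2 s a h t (mem_satS.mp hs X hX) he (fun l => ?_)
    obtain ⟨s', t', hs', he'⟩ := hall l
    exact ⟨s', t', mem_satS.mp hs' X hX, he'⟩

lemma subset_satS {k : ℕ} {A S : Type} (P : RBTemplate k A S) (J : Set S) :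
    J ⊆ SatS P J := (satClosed_satS P J).1

lemma compI_succ_congr {k : ℕ} {A S : Type} (P : RBTemplate k A S) {i j : ℕ}
    (h : compI P i = compI P j) : compI P (i + 1) = compI P (j + 1) := by
  show {s | ∃ h' : S, h' ∈ SatS P (compI P i) ∧ (h', Sum.inr (), s) ∈ P.R} =
       {s | ∃ h' : S, h' ∈ SatS P (compI P j) ∧ (h', Sum.inr (), s) ∈ P.R}
  rw [h]

lemma compI_add_congr {k : ℕ} {A S : Type} (P : RBTemplate k A S) {i j : ℕ}
    (h : compI P i = compI P j) (d : ℕ) : compI P (i + d) = compI P (j + d) := by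
  induction d with
  | zero => exact h
  | succ d ih => exact compI_succ_congr P ih

lemma compI_period {k : ℕ} {A S : Type} (P : RBTemplate k A S) {n m : ℕ}
    (hL : IsLasso P n m) : ∀ j, n ≤ j → compI P (j + (m + 1 - n)) = compI P j := by
  intro j hj
  have h1 : compI P n = compI P (n + (m + 1 - n)) := by
    have e : n + (m + 1 - n) = m + 1 := by have := hL.1; omega
    rw [e]; exact hL.2.1
  have h2 := compI_add_congr P h1 (j - n)
  have e1 : n + (j - n) = j := by omega
  have e2 : n + (m + 1 - n) + (j - n) = j + (m + 1 - n) := by omega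
  rw [e1, e2] at h2
  exact h2.symm

lemma compI_mod {k : ℕ} {A S : Type} (P : RBTemplate k A S) {n m : ℕ}
    (hL : IsLasso P n m) :
    ∀ i, n ≤ i → compI P (n + (i - n) % (m + 1 - n)) = compI P i := by
  have hr : 0 < m + 1 - n := by have := hL.1; omega
  intro i
  induction i using Nat.strong_induction_on with
  | _ i ih =>
    intro hni
    by_cases hc : i - n < m + 1 - n
    · rw [Nat.mod_eq_of_lt hc]
      have e : n + (i - n) = i := by omega
      rw [e]
    · have hge : m + 1 - n ≤ i - n := by omega
      have hstep : compI P (i - (m + 1 - n) + (m + 1 - n)) = compI P (i - (m + 1 - n)) :=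
        compI_period P hL _ (by omega)
      have heq : i - (m + 1 - n) + (m + 1 - n) = i := by omega
      rw [heq] at hstep
      rw [hstep]
      have hm : (i - n) % (m + 1 - n) = (i - (m + 1 - n) - n) % (m + 1 - n) := by
        rw [Nat.mod_eq_sub_mod hge]; congr 1; omega
      rw [hm]
      exact ih (i - (m + 1 - n)) (by omega) (by omega)

lemma compAt_le {n m : ℕ} (hnm : n ≤ m) (i : ℕ) : compAt n m i ≤ m := by
  unfold compAt
  split
  · omega
  · have : (i - n) % (m + 1 - n) < m + 1 - n := Nat.mod_lt _ (by omega)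
    omega

lemma compAt_zero {n m : ℕ} : compAt n m 0 = 0 := by
  unfold compAt
  split
  · rfl
  · omega

lemma compI_compAt {k : ℕ} {A S : Type} (P : RBTemplate k A S) {n m : ℕ}
    (hL : IsLasso P n m) (i : ℕ) : compI P (compAt n m i) = compI P i := by
  have hnm := hL.1
  unfold compAt
  split
  · rfl
  · rename_i h
    exact compI_mod P hL i (by omega)

lemma compAt_succ {n m : ℕ} (hnm : n ≤ m) (i : ℕ) :
    compAt n m (compAt n m i + 1) = compAt n m (i + 1) := by
  by_cases h : i ≤ m
  · have h1 : compAt n m i = i := by unfold compAt; rw [if_pos h]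
    rw [h1]
  · have hr : 0 < m + 1 - n := by omega
    set r := m + 1 - n with hrdef
    set s := (i - n) % r with hsdef
    have hs : s < r := Nat.mod_lt _ hr
    have h1 : compAt n m i = n + s := by
      unfold compAt; rw [if_neg h]
    have h2 : compAt n m (i + 1) = n + (i + 1 - n) % r := by
      unfold compAt; rw [if_neg (by omega)]
    have hkey : (i + 1 - n) % r = (s + 1) % r := by
      rw [hsdef, Nat.mod_add_mod]; congr 1; omega
    rw [h1, h2, hkey]
    by_cases hc : s + 1 < r
    · have h3 : compAt n m (n + s + 1) = n + s + 1 := by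
        unfold compAt; rw [if_pos (by omega)]
      rw [h3, Nat.mod_eq_of_lt hc]; omega
    · have hsr : s + 1 = r := by omega
      have h3 : compAt n m (n + s + 1) = n + (n + s + 1 - n) % r := by
        unfold compAt; rw [if_neg (by omega)]
      rw [h3]
      have e1 : n + s + 1 - n = r := by omega
      rw [e1, Nat.mod_self, ← hsr, Nat.mod_self]

lemma invariant_satS {k : ℕ} {A S ι' : Type} {P : RBTemplate k A S}
    (p : InfPath P ι') (hrun : p.IsRun) :
    ∀ t i, p.conf t i ∈ SatS P (compI P (bC p.sync t)) := by
  intro t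
  induction t with
  | zero => intro i; exact subset_satS P _ (hrun i)
  | succ t ih =>
    intro i
    have hv := p.valid t
    cases hσ : p.sync t with
    | bcast =>
      rw [hσ] at hv
      have hmem : p.conf (t + 1) i ∈ compI P (bC p.sync t + 1) :=
        ⟨p.conf t i, ih i, hv i⟩
      have hb : bC p.sync (t + 1) = bC p.sync t + 1 := by simp [bC, hσ]
      rw [hb]
      exact subset_satS P _ hmem
    | rdz a procs =>
      rw [hσ] at hv
      obtain ⟨hinj, hmove, hstay⟩ := hv
      have hb : bC p.sync (t + 1) = bC p.sync t := by simp [bC, hσ]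
      rw [hb]
      by_cases hi : ∃ j, procs j = i
      · obtain ⟨j, rfl⟩ := hi
        exact (satClosed_satS P _).2 (p.conf t (procs j)) a j (p.conf (t + 1) (procs j))
          (ih _) (hmove j)
          (fun l => ⟨p.conf t (procs l), p.conf (t + 1) (procs l), ih _, hmove l⟩)
      · rw [hstay i (fun j hj => hi ⟨j, hj⟩)]
        exact ih i

lemma noMove {k : ℕ} {A S ι' : Type} {P : RBTemplate k A S}
    (p : InfPath P ι') (i0 : ι') :
    ∀ u d, (∀ x, u ≤ x → x < u + d → ¬ (p.sync x).Moved i0) →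
      p.conf (u + d) i0 = p.conf u i0 ∧ bC p.sync (u + d) = bC p.sync u := by
  intro u d
  induction d with
  | zero => intro _; exact ⟨rfl, rfl⟩
  | succ d ih =>
    intro h
    obtain ⟨hc, hb⟩ := ih (fun x hx h2 => h x hx (by omega))
    have hnm : ¬ (p.sync (u + d)).Moved i0 := h (u + d) (by omega) (by omega)
    have hv := p.valid (u + d)
    cases hσ : p.sync (u + d) with
    | bcast =>
      exact absurd (by rw [hσ]; trivial) hnm
    | rdz a procs =>
      rw [hσ] at hv hnm
      have hstay : p.conf (u + d + 1) i0 = p.conf (u + d) i0 :=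
        hv.2.2 i0 (fun j hj => hnm ⟨j, hj⟩)
      constructor
      · rw [show u + (d + 1) = u + d + 1 from rfl, hstay, hc]
      · rw [show u + (d + 1) = u + d + 1 from rfl]
        simp [bC, hσ, hb]

/-- Every infinite execution of the RB-system induced by `P` is an
infinite run of the template `P^⊸` with component numbers erased. -/
theorem execInf_subset_erased_template_runs
    {k : ℕ} {A S : Type} [Fintype A] [Fintype S] (hk : 2 ≤ k)
    (P : RBTemplate k A S) (hTot : P.BTotal) (hU : P.UniqLab)
    (n₀ m : ℕ) (hL : IsLasso P n₀ m) :
    execInf P ⊆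
      {w | ∃ π : ℕ → EdgeT k A (S × ℕ),
        TemplateRunInf (unwind P n₀ m) π ∧ ∀ t, erE (π t) = w t} := by
  intro w hw
  obtain ⟨n, p, hrun, ι, hmono, hmoved, hedge⟩ := hw
  have hnm : n₀ ≤ m := hL.1
  have hinv := invariant_satS p hrun
  -- no process-0 moves on an interval ⇒ state of 0 and broadcast count unchanged
  have hgap : ∀ u v, u ≤ v → (∀ x, u ≤ x → x < v → ¬ (p.sync x).Moved 0) →
      p.conf v 0 = p.conf u 0 ∧ bC p.sync v = bC p.sync u := by
    intro u v huv h
    have := noMove p 0 u (v - u) (fun x hx h2 => h x hx (by omega))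
    rwa [show u + (v - u) = v by omega] at this
  have hbetween : ∀ t x, ι t < x → x < ι (t + 1) → ¬ (p.sync x).Moved 0 := by
    intro t x h1 h2 hmv
    obtain ⟨m', hm'⟩ := (hmoved x).1 hmv
    have h3 : t < m' := by
      by_contra hcon
      have := hmono.le_iff_le.mpr (not_lt.mp hcon)
      omega
    have h4 : m' < t + 1 := by
      by_contra hcon
      have := hmono.le_iff_le.mpr (not_lt.mp hcon)
      omega
    omega
  have hfirst : p.conf (ι 0) 0 = p.conf 0 0 ∧ bC p.sync (ι 0) = bC p.sync 0 := by
    apply hgap 0 (ι 0) (Nat.zero_le _)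
    intro x _ hx hmv
    obtain ⟨m', hm'⟩ := (hmoved x).1 hmv
    have := hmono.le_iff_le.mpr (Nat.zero_le m')
    omega
  -- endpoints of the edges w t
  have hW : ∀ t, (w t).1 = p.conf (ι t) 0 ∧ (w t).2.2 = p.conf (ι t + 1) 0 := by
    intro t
    have he := hedge t
    cases hσ : p.sync (ι t) with
    | bcast =>
      rw [hσ] at he
      have h2 : (p.conf (ι t) 0, (Sum.inr () : Lab k A), p.conf (ι t + 1) 0) = w t :=
        Option.some.inj he
      rw [← h2]
      exact ⟨rfl, rfl⟩
    | rdz a procs =>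
      have hmv : ∃ j, procs j = 0 := by
        have h0 := (hmoved (ι t)).2 ⟨t, rfl⟩
        rw [hσ] at h0
        exact h0
      rw [hσ] at he
      rw [show edgeAt (p.conf (ι t)) (p.conf (ι t + 1)) (Sync.rdz a procs) 0 =
          some (p.conf (ι t) 0, Sum.inl (a, Classical.choose hmv), p.conf (ι t + 1) 0)
        from dif_pos hmv] at he
      have h2 := Option.some.inj he
      rw [← h2]
      exact ⟨rfl, rfl⟩
  refine ⟨fun t => (((w t).1, compAt n₀ m (bC p.sync (ι t))), (w t).2.1,
      ((w t).2.2, compAt n₀ m (bC p.sync (ι t + 1)))), ⟨?_, ?_, ?_⟩, fun t => rfl⟩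
  · -- every edge of π is an edge of the unwinding
    intro t
    have hcle : compAt n₀ m (bC p.sync (ι t)) ≤ m := compAt_le hnm _
    have hv := p.valid (ι t)
    cases hσ : p.sync (ι t) with
    | bcast =>
      rw [hσ] at hv
      have he := hedge t
      rw [hσ] at he
      have hwt : w t = (p.conf (ι t) 0, Sum.inr (), p.conf (ι t + 1) 0) :=
        (Option.some.inj he).symm
      have hbsucc : bC p.sync (ι t + 1) = bC p.sync (ι t) + 1 := by simp [bC, hσ]
      refine Or.inr ⟨(w t).1, (w t).2.2, compAt n₀ m (bC p.sync (ι t)), hcle, ?_, ?_, ?_⟩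
      · simp only [hwt, hbsucc, ← compAt_succ hnm (bC p.sync (ι t))]
      · rw [compI_compAt P hL, hwt]
        exact hinv (ι t) 0
      · rw [hwt]
        exact hv 0
    | rdz a procs =>
      rw [hσ] at hv
      obtain ⟨hinj, hmove, hstay⟩ := hv
      have hmv : ∃ j, procs j = 0 := by
        have h0 := (hmoved (ι t)).2 ⟨t, rfl⟩
        rw [hσ] at h0
        exact h0
      have hj₀ := Classical.choose_spec hmv
      have he := hedge t
      rw [hσ] at he
      rw [show edgeAt (p.conf (ι t)) (p.conf (ι t + 1)) (Sync.rdz a procs) 0 =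
          some (p.conf (ι t) 0, Sum.inl (a, Classical.choose hmv), p.conf (ι t + 1) 0)
        from dif_pos hmv] at he
      have hwt : w t = (p.conf (ι t) 0, Sum.inl (a, Classical.choose hmv),
          p.conf (ι t + 1) 0) := (Option.some.inj he).symm
      have hbsame : bC p.sync (ι t + 1) = bC p.sync (ι t) := by simp [bC, hσ]
      refine Or.inl ⟨(w t).1, (w t).2.2, (a, Classical.choose hmv),
        compAt n₀ m (bC p.sync (ι t)), hcle, ?_, ?_⟩
      · simp only [hwt, hbsame]
      · rw [compI_compAt P hL]
        have hedge0 : ((w t).1, Sum.inl (a, Classical.choose hmv), (w t).2.2) ∈ P.R := by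
          rw [hwt]
          have h5 := hmove (Classical.choose hmv)
          rw [hj₀] at h5
          exact h5
        refine ⟨(w t).1, a, Classical.choose hmv, (w t).2.2, ?_, ?_, hedge0, ?_⟩
        · rfl
        · rw [hwt]
          exact hinv (ι t) 0
        · intro l
          exact ⟨p.conf (ι t) (procs l), p.conf (ι t + 1) (procs l),
            hinv (ι t) (procs l), hmove l⟩
  · -- consecutive edges
    intro t
    have hgap' := hgap (ι t + 1) (ι (t + 1)) (hmono (Nat.lt_succ_self t))
      (fun x hx1 hx2 => hbetween t x (by omega) hx2)
    show ((w (t + 1)).1, compAt n₀ m (bC p.sync (ι (t + 1)))) =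
      ((w t).2.2, compAt n₀ m (bC p.sync (ι t + 1)))
    rw [(hW (t + 1)).1, (hW t).2, hgap'.1, hgap'.2]
  · -- initial state
    refine ⟨?_, ?_⟩
    · show (w 0).1 ∈ P.I
      rw [(hW 0).1, hfirst.1]
      exact hrun 0
    · show compAt n₀ m (bC p.sync (ι 0)) = 0
      rw [hfirst.2]
      exact compAt_zero
end

section
/- (RB-System Composition) Let P be an RB-template, let b ∈ ℕ, and let π^1, …, π^m be finite runs of the systems P^{n_1}, …, P^{n_m} respectively, each containing exactly b broadcast transitions. Then there is a finite run π of P^{n_1 + ⋯ + n_m} containing exactly b broadcast transitions such that, identifying the processes of P^{n_1+⋯+n_m} with the disjoint union of the processes of the systems P^{n_j}, for every j ∈ [m] and every process i of P^{n_j}, the projection of π onto the process corresponding to (j,i) equals the projection π^j(i). -/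
/-! ### Auxiliary machinery for the composition theorem -/

section RBCompose

open scoped Classical

/-- `Nat.card` of a bounded subtype as a `Finset` count. -/
theorem rb_card_subtype_lt (L : ℕ) (Q : ℕ → Prop) [DecidablePred Q] :
    Nat.card {t // t < L ∧ Q t} = ((Finset.range L).filter Q).card := by
  have h : {t | t < L ∧ Q t} = ↑((Finset.range L).filter Q) := by
    ext x; simp [Finset.mem_filter]
  rw [show {t // t < L ∧ Q t} = {t // t ∈ {t | t < L ∧ Q t}} from rfl]
  rw [Nat.card_coe_set_eq, h, Set.ncard_coe_finset]

theorem rb_filter_Ico_succ (x L : ℕ) (Q : ℕ → Prop) [DecidablePred Q] (hx : x < L) :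
    ((Finset.Ico x L).filter Q).card
      = ((Finset.Ico (x+1) L).filter Q).card + (if Q x then 1 else 0) := by
  have h : Finset.Ico x L = insert x (Finset.Ico (x+1) L) := by
    ext y; simp only [Finset.mem_Ico, Finset.mem_insert]; omega
  rw [h, Finset.filter_insert]
  by_cases hq : Q x
  · rw [if_pos hq, if_pos hq, Finset.card_insert_of_notMem (by simp)]
  · rw [if_neg hq, if_neg hq]; omega

theorem rb_filter_range_succ (t : ℕ) (Q : ℕ → Prop) [DecidablePred Q] :
    ((Finset.range (t+1)).filter Q).card
      = ((Finset.range t).filter Q).card + (if Q t then 1 else 0) := by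
  rw [Finset.range_add_one, Finset.filter_insert]
  by_cases hq : Q t
  · rw [if_pos hq, if_pos hq, Finset.card_insert_of_notMem (by simp)]
  · rw [if_neg hq, if_neg hq]; omega

variable {k : ℕ} {A S : Type} {P : RBTemplate k A S} {M : ℕ} {n : Fin M → ℕ}

/-- Number of broadcast transitions of run `j` remaining from position `x`. -/
noncomputable def remB (p : (j : Fin M) → FinPath P (Fin (n j))) (j : Fin M) (x : ℕ) : ℕ :=
  ((Finset.Ico x ((p j).len)).filter (fun t => (p j).sync t = Sync.bcast)).card

/-- Number of rendezvous transitions of run `j` remaining from position `x`. -/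
noncomputable def remR (p : (j : Fin M) → FinPath P (Fin (n j))) (j : Fin M) (x : ℕ) : ℕ :=
  ((Finset.Ico x ((p j).len)).filter (fun t => ¬ (p j).sync t = Sync.bcast)).card

/-- Total length of the merged run. -/
noncomputable def mlen (p : (j : Fin M) → FinPath P (Fin (n j))) (b : ℕ) : ℕ :=
  (∑ j, remR p j 0) + b

/-- The scheduler: pick a run that can currently do a rendezvous transition (if any). -/
noncomputable def pick (p : (j : Fin M) → FinPath P (Fin (n j))) (c : Fin M → ℕ) :
    Option (Fin M) :=
  if h : ∃ j, c j < (p j).len ∧ (p j).sync (c j) ≠ Sync.bcast then some (Classical.choose h)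
  else none

/-- One step of the scheduler on the vector of positions. -/
noncomputable def stepPos (p : (j : Fin M) → FinPath P (Fin (n j))) (c : Fin M → ℕ) :
    Fin M → ℕ :=
  match pick p c with
  | some j => Function.update c j (c j + 1)
  | none => fun j => if c j < (p j).len then c j + 1 else c j

/-- Positions of the runs after `t` merged steps. -/
noncomputable def cpos (p : (j : Fin M) → FinPath P (Fin (n j))) (t : ℕ) : Fin M → ℕ :=
  (stepPos p)^[t] (fun _ => 0)

/-- The synchronization label of the merged step at position vector `c`. -/
noncomputable def msync (p : (j : Fin M) → FinPath P (Fin (n j))) (c : Fin M → ℕ) :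
    Sync k A ((j : Fin M) × Fin (n j)) :=
  match pick p c with
  | some j =>
      match (p j).sync (c j) with
      | Sync.bcast => Sync.bcast
      | Sync.rdz a procs => Sync.rdz a (fun l => ⟨j, procs l⟩)
  | none => Sync.bcast

/-- Number of broadcast steps among the first `t` merged steps. -/
noncomputable def mB (p : (j : Fin M) → FinPath P (Fin (n j))) (t : ℕ) : ℕ :=
  ((Finset.range t).filter (fun s => msync p (cpos p s) = Sync.bcast)).card

theorem cpos_zero (p : (j : Fin M) → FinPath P (Fin (n j))) (j : Fin M) : cpos p 0 j = 0 := rfl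

theorem cpos_succ (p : (j : Fin M) → FinPath P (Fin (n j))) (t : ℕ) :
    cpos p (t+1) = stepPos p (cpos p t) := Function.iterate_succ_apply' _ _ _

theorem mB_succ (p : (j : Fin M) → FinPath P (Fin (n j))) (t : ℕ) :
    mB p (t+1) = mB p t + (if msync p (cpos p t) = Sync.bcast then 1 else 0) :=
  rb_filter_range_succ t _

theorem remB_step (p : (j : Fin M) → FinPath P (Fin (n j))) (j : Fin M) (x : ℕ)
    (hx : x < (p j).len) :
    remB p j x = remB p j (x+1) + (if (p j).sync x = Sync.bcast then 1 else 0) :=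
  rb_filter_Ico_succ x _ _ hx

theorem remR_step (p : (j : Fin M) → FinPath P (Fin (n j))) (j : Fin M) (x : ℕ)
    (hx : x < (p j).len) :
    remR p j x = remR p j (x+1) + (if ¬ (p j).sync x = Sync.bcast then 1 else 0) :=
  rb_filter_Ico_succ x _ _ hx

theorem remB_pos (p : (j : Fin M) → FinPath P (Fin (n j))) (j : Fin M) (x : ℕ)
    (hx : x < (p j).len) (hs : (p j).sync x = Sync.bcast) : 1 ≤ remB p j x := by
  rw [remB_step p j x hx, if_pos hs]; omega

theorem remB_end (p : (j : Fin M) → FinPath P (Fin (n j))) (j : Fin M) :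
    remB p j ((p j).len) = 0 := by
  simp [remB]

theorem remR_end (p : (j : Fin M) → FinPath P (Fin (n j))) (j : Fin M) :
    remR p j ((p j).len) = 0 := by
  simp [remR]

theorem rem_done (p : (j : Fin M) → FinPath P (Fin (n j))) (j : Fin M) (x : ℕ)
    (hle : x ≤ (p j).len) (hB : remB p j x = 0) (hR : remR p j x = 0) : x = (p j).len := by
  have h := Finset.card_filter_add_card_filter_not
    (s := Finset.Ico x ((p j).len)) (p := fun t => (p j).sync t = Sync.bcast)
  rw [show ((Finset.Ico x ((p j).len)).filter (fun t => (p j).sync t = Sync.bcast)).card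
      = remB p j x from rfl] at h
  have h2 : ((Finset.Ico x ((p j).len)).filter
      (fun t => ¬ (p j).sync t = Sync.bcast)).card = remR p j x := rfl
  rw [h2, hB, hR, Nat.card_Ico] at h
  simp at h
  omega

end RBCompose
section RBCompose2
open scoped Classical
variable {k : ℕ} {A S : Type} {P : RBTemplate k A S} {M : ℕ} {n : Fin M → ℕ}

/-- Unfolding lemmas for the scheduler. -/
theorem msync_some (p : (j : Fin M) → FinPath P (Fin (n j))) (c : Fin M → ℕ) (j : Fin M)
    (hpk : pick p c = some j) :
    msync p c = (match (p j).sync (c j) with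
      | Sync.bcast => Sync.bcast
      | Sync.rdz a procs => Sync.rdz a (fun l => (⟨j, procs l⟩ : (j : Fin M) × Fin (n j)))) := by
  unfold msync; rw [hpk]

theorem msync_none (p : (j : Fin M) → FinPath P (Fin (n j))) (c : Fin M → ℕ)
    (hpk : pick p c = none) : msync p c = Sync.bcast := by
  unfold msync; rw [hpk]

theorem stepPos_some (p : (j : Fin M) → FinPath P (Fin (n j))) (c : Fin M → ℕ) (j : Fin M)
    (hpk : pick p c = some j) : stepPos p c = Function.update c j (c j + 1) := by
  unfold stepPos; rw [hpk]

theorem stepPos_none (p : (j : Fin M) → FinPath P (Fin (n j))) (c : Fin M → ℕ)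
    (hpk : pick p c = none) :
    stepPos p c = fun j => if c j < (p j).len then c j + 1 else c j := by
  unfold stepPos; rw [hpk]

/-- If the scheduler is at a broadcast step (before the end), every run is unfinished
and sits at a broadcast transition. -/
theorem rb_ready (p : (j : Fin M) → FinPath P (Fin (n j))) (b t : ℕ)
    (h1 : ∀ j, cpos p t j ≤ (p j).len)
    (h2 : ∀ j, remB p j (cpos p t j) + mB p t = b)
    (h3 : (∑ j, remR p j (cpos p t j)) + b + t = mlen p b + mB p t)
    (ht : t < mlen p b) (hpk : pick p (cpos p t) = none) :
    ∀ j, cpos p t j < (p j).len ∧ (p j).sync (cpos p t j) = Sync.bcast := by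
  have hforced : ∀ j, cpos p t j < (p j).len → (p j).sync (cpos p t j) = Sync.bcast := by
    intro j hj
    by_contra hne
    rw [pick, dif_pos ⟨j, hj, hne⟩] at hpk
    exact Option.some_ne_none _ hpk
  intro j
  by_cases hj : cpos p t j < (p j).len
  · exact ⟨hj, hforced j hj⟩
  · exfalso
    have hjl : cpos p t j = (p j).len := le_antisymm (h1 j) (not_lt.mp hj)
    have hmb : mB p t = b := by have := h2 j; rw [hjl, remB_end] at this; omega
    have hall : ∀ j', cpos p t j' = (p j').len := by
      intro j'
      rcases lt_or_eq_of_le (h1 j') with hlt | he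
      · exfalso
        have hb1 := remB_pos p j' _ hlt (hforced j' hlt)
        have := h2 j'
        omega
      · exact he
    have hz : (∑ j', remR p j' (cpos p t j')) = 0 := by
      apply Finset.sum_eq_zero
      intro j' _
      rw [hall j', remR_end]
    rw [hz, hmb] at h3
    omega

/-- The master invariant of the scheduler. -/
theorem rb_master (p : (j : Fin M) → FinPath P (Fin (n j))) (b : ℕ)
    (hlenB : ∀ j, remB p j 0 = b) :
    ∀ t, t ≤ mlen p b →
      (∀ j, cpos p t j ≤ (p j).len) ∧
      (∀ j, remB p j (cpos p t j) + mB p t = b) ∧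
      ((∑ j, remR p j (cpos p t j)) + b + t = mlen p b + mB p t) := by
  intro t
  induction t with
  | zero =>
    intro _
    refine ⟨fun j => Nat.zero_le _, fun j => by rw [cpos_zero]; simp [mB, hlenB j], ?_⟩
    simp [mB, cpos, mlen]
    rfl
  | succ t IH =>
    intro ht
    obtain ⟨h1, h2, h3⟩ := IH (by omega)
    by_cases h : ∃ j, cpos p t j < (p j).len ∧ (p j).sync (cpos p t j) ≠ Sync.bcast
    · -- rendezvous step
      have hpk : pick p (cpos p t) = some (Classical.choose h) := by rw [pick, dif_pos h]
      obtain ⟨hjlt, hjne⟩ := Classical.choose_spec h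
      generalize hjdef : Classical.choose h = j at hpk hjlt hjne
      have hstep : cpos p (t+1) = Function.update (cpos p t) j (cpos p t j + 1) := by
        rw [cpos_succ, stepPos_some p _ j hpk]
      have hms : ¬ msync p (cpos p t) = Sync.bcast := by
        rw [msync_some p _ j hpk]
        cases hsy : (p j).sync (cpos p t j) with
        | bcast => exact absurd hsy hjne
        | rdz a procs => simp
      have hmB : mB p (t+1) = mB p t := by rw [mB_succ, if_neg hms]; omega
      have hup : ∀ j', j' ≠ j → cpos p (t+1) j' = cpos p t j' := by
        intro j' hne; rw [hstep, Function.update_of_ne hne]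
      have hupj : cpos p (t+1) j = cpos p t j + 1 := by
        rw [hstep, Function.update_self]
      refine ⟨?_, ?_, ?_⟩
      · intro j'
        by_cases e : j' = j
        · subst e; rw [hupj]; omega
        · rw [hup j' e]; exact h1 j'
      · intro j'
        by_cases e : j' = j
        · subst e
          rw [hupj, hmB]
          have hst := remB_step p j' (cpos p t j') hjlt
          rw [if_neg hjne] at hst
          have h2' := h2 j'
          omega
        · rw [hup j' e, hmB]; exact h2 j'
      · rw [hmB]
        have hfun : (fun j' => remR p j' (cpos p (t+1) j'))
            = Function.update (fun j' => remR p j' (cpos p t j')) j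
                (remR p j (cpos p t j + 1)) := by
          funext j'
          by_cases e : j' = j
          · subst e; rw [hupj, Function.update_self]
          · rw [hup j' e, Function.update_of_ne e]
        have hsum : (∑ j', remR p j' (cpos p (t+1) j'))
            = remR p j (cpos p t j + 1) + ∑ j' ∈ Finset.univ \ {j}, remR p j' (cpos p t j') := by
          calc (∑ j', remR p j' (cpos p (t+1) j'))
              = ∑ j', Function.update (fun j' => remR p j' (cpos p t j')) j
                  (remR p j (cpos p t j + 1)) j' := by rw [← hfun]
            _ = _ := Finset.sum_update_of_mem (Finset.mem_univ j) _ _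
        have hsum2 : (∑ j', remR p j' (cpos p t j'))
            = remR p j (cpos p t j) + ∑ j' ∈ Finset.univ \ {j}, remR p j' (cpos p t j') :=
          Finset.sum_eq_add_sum_sdiff_singleton_of_mem (Finset.mem_univ j) _
        have hstepR := remR_step p j (cpos p t j) hjlt
        rw [if_pos hjne] at hstepR
        rw [hsum]
        rw [hsum2] at h3
        omega
    · -- broadcast step
      have hpk : pick p (cpos p t) = none := by rw [pick, dif_neg h]
      have hms : msync p (cpos p t) = Sync.bcast := msync_none p _ hpk
      have hmB : mB p (t+1) = mB p t + 1 := by rw [mB_succ, if_pos hms]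
      have hrdy := rb_ready p b t h1 h2 h3 (by omega) hpk
      have hstep : ∀ j, cpos p (t+1) j = cpos p t j + 1 := by
        intro j
        rw [cpos_succ, stepPos_none p _ hpk]
        simp [(hrdy j).1]
      refine ⟨?_, ?_, ?_⟩
      · intro j; rw [hstep j]; exact (hrdy j).1
      · intro j
        have hst := remB_step p j (cpos p t j) (hrdy j).1
        rw [if_pos (hrdy j).2] at hst
        have h2' := h2 j
        rw [hstep j, hmB]
        omega
      · have hR : ∀ j, remR p j (cpos p (t+1) j) = remR p j (cpos p t j) := by
          intro j
          have hst := remR_step p j (cpos p t j) (hrdy j).1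
          rw [if_neg (not_not_intro (hrdy j).2)] at hst
          rw [hstep j]
          omega
        rw [hmB, Finset.sum_congr rfl (fun j _ => hR j)]
        omega

/-- At time `mlen p b`, exactly `b` broadcasts have happened and all runs are finished. -/
theorem rb_at_end (p : (j : Fin M) → FinPath P (Fin (n j))) (b : ℕ)
    (hlenB : ∀ j, remB p j 0 = b) :
    mB p (mlen p b) = b ∧ ∀ j, cpos p (mlen p b) j = (p j).len := by
  obtain ⟨h1, h2, h3⟩ := rb_master p b hlenB (mlen p b) le_rfl
  have hmb : mB p (mlen p b) = b ∧ (∑ j, remR p j (cpos p (mlen p b) j)) = 0 := by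
    rcases isEmpty_or_nonempty (Fin M) with hM | hM
    · have hz : (∑ j, remR p j (cpos p (mlen p b) j)) = 0 := by
        rw [Finset.univ_eq_empty]; simp
      constructor
      · rw [hz] at h3; omega
      · exact hz
    · obtain ⟨j⟩ := hM
      have := h2 j
      omega
  refine ⟨hmb.1, fun j => ?_⟩
  apply rem_done p j _ (h1 j)
  · have := h2 j; omega
  · have hle : remR p j (cpos p (mlen p b) j) ≤ ∑ j', remR p j' (cpos p (mlen p b) j') :=
      Finset.single_le_sum (f := fun j' => remR p j' (cpos p (mlen p b) j'))
        (fun _ _ => Nat.zero_le _) (Finset.mem_univ j)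
    have := hmb.2
    omega

end RBCompose2
section RBCompose3
open scoped Classical
variable {k : ℕ} {A S : Type} {P : RBTemplate k A S} {M : ℕ} {n : Fin M → ℕ}

theorem edgeAt_rdz_some {ι : Type} (f g : ι → S) (a : A) (procs : Fin k → ι)
    (hinj : Function.Injective procs) (l : Fin k) :
    edgeAt f g (Sync.rdz a procs) (procs l)
      = some (f (procs l), Sum.inl (a, l), g (procs l)) := by
  have hex : ∃ m, procs m = procs l := ⟨l, rfl⟩
  simp only [edgeAt]
  rw [dif_pos hex]
  have hcl : Classical.choose hex = l := hinj (Classical.choose_spec hex)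
  rw [hcl]

theorem edgeAt_rdz_none {ι : Type} (f g : ι → S) (a : A) (procs : Fin k → ι)
    (i : ι) (hni : ¬ ∃ l, procs l = i) :
    edgeAt f g (Sync.rdz a procs) i = none := by
  simp only [edgeAt]
  rw [dif_neg hni]

theorem edgeAt_bcast {ι : Type} (f g : ι → S) (i : ι) :
    edgeAt (k := k) (A := A) f g Sync.bcast i = some (f i, Sum.inr (), g i) := rfl

/-- The projections of the merged path agree with the projections of the component runs. -/
theorem rb_proj (p : (j : Fin M) → FinPath P (Fin (n j))) (b : ℕ)
    (hlenB : ∀ j, remB p j 0 = b) (j : Fin M) (i : Fin (n j)) :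
    ∀ t, t ≤ mlen p b →
      (List.range t).filterMap (fun s =>
          edgeAt (fun x : (j : Fin M) × Fin (n j) => (p x.1).conf (cpos p s x.1) x.2)
            (fun x : (j : Fin M) × Fin (n j) => (p x.1).conf (cpos p (s+1) x.1) x.2)
            (msync p (cpos p s)) ⟨j, i⟩)
      = (List.range (cpos p t j)).filterMap (fun s =>
          edgeAt ((p j).conf s) ((p j).conf (s+1)) ((p j).sync s) i) := by
  intro t
  induction t with
  | zero => intro _; rw [cpos_zero]; simp
  | succ t IH =>
    intro ht
    obtain ⟨h1, h2, h3⟩ := rb_master p b hlenB t (by omega)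
    rw [List.range_succ, List.filterMap_append, IH (by omega)]
    by_cases h : ∃ j, cpos p t j < (p j).len ∧ (p j).sync (cpos p t j) ≠ Sync.bcast
    · -- rendezvous step
      have hpk : pick p (cpos p t) = some (Classical.choose h) := by rw [pick, dif_pos h]
      obtain ⟨hjlt, hjne⟩ := Classical.choose_spec h
      generalize hjdef : Classical.choose h = j' at hpk hjlt hjne
      have hupj : cpos p (t+1) j' = cpos p t j' + 1 := by
        rw [cpos_succ, stepPos_some p _ j' hpk, Function.update_self]
      have hup : ∀ j'', j'' ≠ j' → cpos p (t+1) j'' = cpos p t j'' := fun j'' hne => by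
        rw [cpos_succ, stepPos_some p _ j' hpk, Function.update_of_ne hne]
      have hval := (p j').valid _ hjlt
      cases hsy : (p j').sync (cpos p t j') with
      | bcast => exact absurd hsy hjne
      | rdz a procs =>
        rw [hsy] at hval
        obtain ⟨hinj, hedge, hfr⟩ := hval
        have hmsy : msync p (cpos p t)
            = Sync.rdz a (fun l => (⟨j', procs l⟩ : (j : Fin M) × Fin (n j))) := by
          rw [msync_some p _ j' hpk, hsy]
        by_cases e : j' = j
        · subst e
          rw [hupj, List.range_succ, List.filterMap_append]
          by_cases hex : ∃ l, procs l = i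
          · obtain ⟨l, hl⟩ := hex
            subst hl
            have hinjL : Function.Injective
                (fun l => (⟨j', procs l⟩ : (j : Fin M) × Fin (n j))) :=
              fun l l' hll => hinj (by simpa using hll)
            have hE : edgeAt (fun x : (j : Fin M) × Fin (n j) => (p x.1).conf (cpos p t x.1) x.2)
                (fun x : (j : Fin M) × Fin (n j) => (p x.1).conf (cpos p (t+1) x.1) x.2)
                (msync p (cpos p t)) ⟨j', procs l⟩
                = some ((p j').conf (cpos p t j') (procs l), Sum.inl (a, l),
                    (p j').conf (cpos p (t+1) j') (procs l)) := by
              rw [hmsy]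
              exact edgeAt_rdz_some _ _ a _ hinjL l
            have hE' : edgeAt ((p j').conf (cpos p t j')) ((p j').conf (cpos p t j' + 1))
                ((p j').sync (cpos p t j')) (procs l)
                = some ((p j').conf (cpos p t j') (procs l), Sum.inl (a, l),
                    (p j').conf (cpos p t j' + 1) (procs l)) := by
              rw [hsy]
              exact edgeAt_rdz_some _ _ a _ hinj l
            simp only [List.filterMap_cons, List.filterMap_nil, hE, hE', hupj]
          · have hni : ¬ ∃ l, (fun l => (⟨j', procs l⟩ : (j : Fin M) × Fin (n j))) l
                = ⟨j', i⟩ := by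
              rintro ⟨l, hl⟩
              exact hex ⟨l, by simpa using hl⟩
            have hE : edgeAt (fun x : (j : Fin M) × Fin (n j) => (p x.1).conf (cpos p t x.1) x.2)
                (fun x : (j : Fin M) × Fin (n j) => (p x.1).conf (cpos p (t+1) x.1) x.2)
                (msync p (cpos p t)) ⟨j', i⟩ = none := by
              rw [hmsy]
              exact edgeAt_rdz_none _ _ a _ _ hni
            have hE' : edgeAt ((p j').conf (cpos p t j')) ((p j').conf (cpos p t j' + 1))
                ((p j').sync (cpos p t j')) i = none := by
              rw [hsy]
              exact edgeAt_rdz_none _ _ a _ _ hex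
            simp only [List.filterMap_cons, List.filterMap_nil, hE, hE', List.append_nil]
        · have hni : ¬ ∃ l, (fun l => (⟨j', procs l⟩ : (j : Fin M) × Fin (n j))) l
              = ⟨j, i⟩ := by
            rintro ⟨l, hl⟩
            exact e (congrArg Sigma.fst hl)
          have hE : edgeAt (fun x : (j : Fin M) × Fin (n j) => (p x.1).conf (cpos p t x.1) x.2)
              (fun x : (j : Fin M) × Fin (n j) => (p x.1).conf (cpos p (t+1) x.1) x.2)
              (msync p (cpos p t)) ⟨j, i⟩ = none := by
            rw [hmsy]
            exact edgeAt_rdz_none _ _ a _ _ hni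
          rw [hup j (fun hh => e hh.symm)]
          simp only [List.filterMap_cons, List.filterMap_nil, hE, List.append_nil]
    · -- broadcast step
      have hpk : pick p (cpos p t) = none := by rw [pick, dif_neg h]
      have hrdy := rb_ready p b t h1 h2 h3 (by omega) hpk
      have hupj : cpos p (t+1) j = cpos p t j + 1 := by
        rw [cpos_succ, stepPos_none p _ hpk]
        simp [(hrdy j).1]
      have hE : edgeAt (fun x : (j : Fin M) × Fin (n j) => (p x.1).conf (cpos p t x.1) x.2)
          (fun x : (j : Fin M) × Fin (n j) => (p x.1).conf (cpos p (t+1) x.1) x.2)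
          (msync p (cpos p t)) ⟨j, i⟩
          = some ((p j).conf (cpos p t j) i, Sum.inr (), (p j).conf (cpos p (t+1) j) i) := by
        rw [msync_none p _ hpk]
        rfl
      have hE' : edgeAt ((p j).conf (cpos p t j)) ((p j).conf (cpos p t j + 1))
          ((p j).sync (cpos p t j)) i
          = some ((p j).conf (cpos p t j) i, Sum.inr (), (p j).conf (cpos p t j + 1) i) := by
        rw [(hrdy j).2]
        rfl
      rw [hupj, List.range_succ, List.filterMap_append]
      simp only [List.filterMap_cons, List.filterMap_nil, hE, hE', hupj]
end RBCompose3
section RBFinal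
open scoped Classical

/-- **RB-System Composition.** Given finite runs `p j` of the systems
`P^(n j)` (j ∈ [M]), each with exactly `b` broadcast transitions, there is a single
finite run of the system whose processes are the disjoint union of the processes of
the systems `P^(n j)`, with exactly `b` broadcast transitions, whose projection onto
the process corresponding to `(j, i)` is the projection of `p j` onto `i`. -/
theorem rb_system_composition
    {k : ℕ} {A S : Type} [Fintype A] [Fintype S] (hk : 2 ≤ k)
    (P : RBTemplate k A S) (hTot : P.BTotal)
    (M : ℕ) (n : Fin M → ℕ) (b : ℕ)
    (p : (j : Fin M) → FinPath P (Fin (n j)))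
    (hrun : ∀ j, (p j).IsRun) (hb : ∀ j, (p j).bcasts = b) :
    ∃ q : FinPath P ((j : Fin M) × Fin (n j)), q.IsRun ∧ q.bcasts = b ∧
      ∀ (j : Fin M) (i : Fin (n j)), q.proj ⟨j, i⟩ = (p j).proj i := by
  have hlenB : ∀ j, remB p j 0 = b := by
    intro j
    rw [← hb j]
    unfold remB FinPath.bcasts
    rw [rb_card_subtype_lt, Finset.range_eq_Ico]
  obtain ⟨hend1, hend2⟩ := rb_at_end p b hlenB
  refine ⟨⟨mlen p b, fun t x => (p x.1).conf (cpos p t x.1) x.2,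
      fun t => msync p (cpos p t), ?_⟩, ?_, ?_, ?_⟩
  · -- validity
    intro t ht
    show RBTrans P (fun x => (p x.1).conf (cpos p t x.1) x.2) (msync p (cpos p t))
      (fun x => (p x.1).conf (cpos p (t+1) x.1) x.2)
    obtain ⟨h1, h2, h3⟩ := rb_master p b hlenB t (le_of_lt ht)
    by_cases h : ∃ j, cpos p t j < (p j).len ∧ (p j).sync (cpos p t j) ≠ Sync.bcast
    · have hpk : pick p (cpos p t) = some (Classical.choose h) := by rw [pick, dif_pos h]
      obtain ⟨hjlt, hjne⟩ := Classical.choose_spec h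
      generalize hjdef : Classical.choose h = j at hpk hjlt hjne
      have hval := (p j).valid _ hjlt
      cases hsy : (p j).sync (cpos p t j) with
      | bcast => exact absurd hsy hjne
      | rdz a procs =>
        rw [hsy] at hval
        obtain ⟨hinj, hedge, hfr⟩ := hval
        have hmsy : msync p (cpos p t)
            = Sync.rdz a (fun l => (⟨j, procs l⟩ : (j : Fin M) × Fin (n j))) := by
          rw [msync_some p _ j hpk, hsy]
        have hupj : cpos p (t+1) j = cpos p t j + 1 := by
          rw [cpos_succ, stepPos_some p _ j hpk, Function.update_self]
        have hup : ∀ j', j' ≠ j → cpos p (t+1) j' = cpos p t j' := fun j' hne => by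
          rw [cpos_succ, stepPos_some p _ j hpk, Function.update_of_ne hne]
        rw [hmsy]
        refine ⟨?_, ?_, ?_⟩
        · intro l l' hll
          exact hinj (by simpa using hll)
        · intro l
          show ((p j).conf (cpos p t j) (procs l), Sum.inl (a, l),
              (p j).conf (cpos p (t+1) j) (procs l)) ∈ P.R
          rw [hupj]
          exact hedge l
        · rintro ⟨j', i⟩ hni
          show (p j').conf (cpos p (t+1) j') i = (p j').conf (cpos p t j') i
          by_cases e : j' = j
          · subst e
            rw [hupj]
            apply hfr
            intro l hl
            exact hni l (congrArg (fun x => (⟨_, x⟩ : (j : Fin M) × Fin (n j))) hl)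
          · rw [hup j' e]
    · have hpk : pick p (cpos p t) = none := by rw [pick, dif_neg h]
      have hrdy := rb_ready p b t h1 h2 h3 ht hpk
      rw [msync_none p _ hpk]
      rintro ⟨j, i⟩
      show ((p j).conf (cpos p t j) i, Sum.inr (), (p j).conf (cpos p (t+1) j) i) ∈ P.R
      have hupj : cpos p (t+1) j = cpos p t j + 1 := by
        rw [cpos_succ, stepPos_none p _ hpk]
        simp [(hrdy j).1]
      rw [hupj]
      have hval := (p j).valid _ (hrdy j).1
      rw [(hrdy j).2] at hval
      exact hval i
  · -- initial
    rintro ⟨j, i⟩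
    show (p j).conf (cpos p 0 j) i ∈ P.I
    rw [cpos_zero]
    exact hrun j i
  · -- broadcast count
    show Nat.card {t : ℕ // t < mlen p b ∧ msync p (cpos p t) = Sync.bcast} = b
    rw [rb_card_subtype_lt]
    exact hend1
  · -- projections
    intro j i
    have hp := rb_proj p b hlenB j i (mlen p b) le_rfl
    rw [hend2 j] at hp
    exact hp
end RBFinal
end
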